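/- Let p be a prime, G a finite p-group of order p^n, k = ZMod p, kG the group algebra with Jacobson radical J, and for r ≥ 1 let F_r = {g ∈ G : (g : kG) - 1 ∈ J^r} be the r-th dimension subgroup. Let g_1, …, g_n be Jennings pc-generators for G. Then for each 1 ≤ i ≤ n, g_i^p lies in the subgroup generated by {g_{i+1}, …, g_n}; and for all 1 ≤ i < j ≤ n, the commutator ⁅g_i, g_j⁆ lies in the subgroup generated by {g_{j+1}, …, g_n}. -/

import Mathlib

open scoped commutatorElement

/-- The Jacobson radical (as a left ideal) of a ring is closed under right
multiplication. -/
theorem jacobson_bot_mul_mem_right {R : Type*} [Ring R]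
    {x : R} (hx : x ∈ (⊥ : Ideal R).jacobson) (c : R) : x * c ∈ (⊥ : Ideal R).jacobson := by
  rw [Ideal.mem_jacobson_iff] at hx ⊢
  intro y
  obtain ⟨z, hz⟩ := hx (c * y)
  rw [Ideal.mem_bot] at hz
  refine ⟨1 - y * x * z * c, ?_⟩
  rw [Ideal.mem_bot]
  have expand : (1 - y * x * z * c) * y * (x * c) + (1 - y * x * z * c) - 1
      = - (y * x * (z * (c * y) * x + z - 1) * c) := by noncomm_ring
  rw [expand, hz]
  simp

/-- The Jacobson radical of a finite ring is nilpotent. -/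
theorem finite_ring_isNilpotent_jacobson_bot (R : Type*) [Ring R] [Finite R] :
    IsNilpotent ((⊥ : Ideal R).jacobson) := by
  classical
  set J := (⊥ : Ideal R).jacobson with hJdef
  -- Nakayama for (left) ideals of a finite ring
  have Jnak : ∀ (m : ℕ) (s : Finset R) (K : Ideal R), s.card = m →
      Ideal.span ↑s = K → J * K = K → K = ⊥ := by
    intro m
    induction m with
    | zero =>
      intro s K hcard hspan _
      rw [Finset.card_eq_zero] at hcard
      subst hcard
      simpa [Ideal.span_empty] using hspan.symm
    | succ m ih =>
      intro s K hcard hspan hJK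
      obtain ⟨x, hxs⟩ : s.Nonempty := Finset.card_pos.mp (by omega)
      have hrep : ∀ y ∈ J * K, ∃ a : R → R, (∀ b, a b ∈ J) ∧ ∑ b ∈ s, a b * b = y := by
        intro y hy
        refine Submodule.smul_induction_on hy ?_ ?_
        · intro r hr n hn
          rw [← hspan] at hn
          obtain ⟨f, -, hf⟩ := Submodule.mem_span_finset.mp hn
          refine ⟨fun b => r * f b, fun b => jacobson_bot_mul_mem_right hr (f b), ?_⟩
          rw [smul_eq_mul, ← hf, Finset.mul_sum]
          exact Finset.sum_congr rfl fun b _ => by rw [smul_eq_mul, mul_assoc]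
        · rintro y₁ y₂ ⟨a₁, ha₁, rfl⟩ ⟨a₂, ha₂, rfl⟩
          exact ⟨fun b => a₁ b + a₂ b, fun b => J.add_mem (ha₁ b) (ha₂ b), by
            rw [← Finset.sum_add_distrib]
            exact Finset.sum_congr rfl fun b _ => add_mul _ _ _⟩
      have hxK : x ∈ J * K := by
        rw [hJK, ← hspan]; exact Ideal.subset_span hxs
      obtain ⟨a, haJ, hax⟩ := hrep x hxK
      have hsplit : a x * x + ∑ b ∈ s.erase x, a b * b = x := by
        rw [Finset.add_sum_erase s (fun b => a b * b) hxs]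
        exact hax
      have hsum : ∑ b ∈ s.erase x, a b * b = x - a x * x := eq_sub_of_add_eq' hsplit
      obtain ⟨z, hz⟩ := (Ideal.mem_jacobson_iff.mp (haJ x)) (-1)
      rw [Ideal.mem_bot] at hz
      have hzinv : z * (1 - a x) = 1 := by
        have h2 : z * (1 - a x) - 1 = z * -1 * a x + z - 1 := by noncomm_ring
        exact sub_eq_zero.mp (h2.trans hz)
      have hxmem : x ∈ Ideal.span ↑(s.erase x) := by
        have hw : (1 - a x) * x ∈ Ideal.span ↑(s.erase x) := by
          have heq : (1 - a x) * x = ∑ b ∈ s.erase x, a b * b := by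
            rw [hsum]; noncomm_ring
          rw [heq]
          exact Ideal.sum_mem _ fun b hb => Ideal.mul_mem_left _ _ (Ideal.subset_span hb)
        have h3 := Ideal.mul_mem_left _ z hw
        rwa [← mul_assoc, hzinv, one_mul] at h3
      have hspan' : Ideal.span ↑(s.erase x) = K := by
        refine le_antisymm ?_ ?_
        · rw [← hspan]
          exact Ideal.span_mono (by exact_mod_cast Finset.coe_subset.mpr (Finset.erase_subset _ _))
        · rw [← hspan]
          refine Ideal.span_le.mpr ?_
          intro b hb
          rcases eq_or_ne b x with rfl | hbx
          · exact hxmem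
          · exact Ideal.subset_span (Finset.mem_erase.mpr ⟨hbx, hb⟩)
      exact ih (s.erase x) K (by rw [Finset.card_erase_of_mem hxs, hcard]; omega) hspan' hJK
  -- J * ⊤ = J , using right-closedness
  have hJtop : J * (⊤ : Ideal R) = J := by
    refine le_antisymm (Submodule.mul_le.mpr fun a ha b _ =>
      jacobson_bot_mul_mem_right ha b) fun a ha => ?_
    have := Submodule.mul_mem_mul (M := J) (N := (⊤ : Ideal R)) ha (Submodule.mem_top (x := (1:R)))
    simpa using this
  -- J commutes with its powers
  have hcomm : ∀ b : ℕ, J * J ^ b = J ^ b * J := by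
    intro b
    induction b with
    | zero =>
      rw [Submodule.pow_zero]
      rw [Ideal.one_eq_top, Ideal.top_mul, hJtop]
    | succ b ihb =>
      rw [Submodule.pow_succ (M := J) (n := b), ← mul_assoc, ihb]
  haveI : Finite (Ideal R) := Finite.of_injective (fun I => (I : Set R)) SetLike.coe_injective
  obtain ⟨m₁, m₂, hne, heq⟩ := Finite.exists_ne_map_eq_of_infinite (fun m : ℕ => J ^ m)
  have main : ∀ a b : ℕ, a < b → J ^ a = J ^ b → IsNilpotent J := by
    intro a b hab hpow
    have hstab : J * J ^ a = J ^ a := by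
      rw [hcomm a, ← Submodule.pow_succ]
      refine le_antisymm (Ideal.pow_le_pow_right (by omega)) ?_
      conv_lhs => rw [hpow]
      exact Ideal.pow_le_pow_right (by omega)
    refine ⟨a, ?_⟩
    have hfin : ((J ^ a : Ideal R) : Set R).Finite := Set.toFinite _
    have hres := Jnak hfin.toFinset.card hfin.toFinset (J ^ a) rfl
      (by rw [Set.Finite.coe_toFinset]; exact Ideal.span_eq _) hstab
    simpa using hres
  rcases lt_or_gt_of_ne hne with h | h
  · exact main m₁ m₂ h heq
  · exact main m₂ m₁ h heq.symm

/-- if `g 0, …, g (n-1)` are Jennings pc-generators for a group `G` of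
order `p^n` (with nondecreasing dimensions `d i`, each `g i` lying in the `d i`-th
dimension subgroup but not the next, and the `g i` of dimension `r` mapping to a
minimal generating set of `F_r/F_{r+1}`), then `(g i)^p` lies in the subgroup
generated by the later generators, and so does every commutator `⁅g i, g j⁆` (`i < j`),
in the subgroup generated by the generators after `g j`. -/
theorem jennings_pc_generators_give_pc_presentation
    (p : ℕ) (hp : p.Prime) (G : Type*) [Group G] [Fintype G] (hG : IsPGroup p G)
    (n : ℕ) (hcard : Fintype.card G = p ^ n)
    (J : Ideal (MonoidAlgebra (ZMod p) G))
    (hJ : J = (⊥ : Ideal (MonoidAlgebra (ZMod p) G)).jacobson)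
    -- the dimension subgroups, as sets: F r = {g | g - 1 ∈ J^r}
    (F : ℕ → Set G)
    (hF : ∀ r, F r = {x : G | MonoidAlgebra.of (ZMod p) G x - 1 ∈ J ^ r})
    -- Jennings pc-generators with nondecreasing dimensions d
    (g : Fin n → G) (d : Fin n → ℕ)
    (hd1 : ∀ i, 1 ≤ d i) (hmono : Monotone d)
    (hmem : ∀ i, g i ∈ F (d i)) (hnotmem : ∀ i, g i ∉ F (d i + 1))
    -- for each r, the generators of dimension r together with F_{r+1} generate F_r …
    (hgen : ∀ r, 1 ≤ r →
      (Subgroup.closure ((g '' {i | d i = r}) ∪ F (r + 1)) : Set G) = F r)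
    -- … and minimally so: no proper subset of them (with F_{r+1}) generates F_r
    (hmin : ∀ r, 1 ≤ r → ∀ s : Set (Fin n), s ⊂ {i | d i = r} →
      (Subgroup.closure ((g '' s) ∪ F (r + 1)) : Set G) ≠ F r) :
    (∀ i : Fin n,
      g i ^ p ∈ Subgroup.closure {x : G | ∃ j : Fin n, i < j ∧ x = g j}) ∧
    (∀ i j : Fin n, i < j →
      ⁅g i, g j⁆ ∈ Subgroup.closure {x : G | ∃ l : Fin n, j < l ∧ x = g l}) := by
  haveI := Fact.mk hp
  set R := MonoidAlgebra (ZMod p) G with hR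
  haveI : Finite R :=
    Finite.of_equiv (G → ZMod p) ((Finsupp.equivFunOnFinite (α := G) (M := ZMod p)).symm.trans MonoidAlgebra.coeffEquiv.symm)
  haveI : CharP R p :=
    charP_of_injective_algebraMap (algebraMap (ZMod p) R).injective p
  set of := MonoidAlgebra.of (ZMod p) G with hof
  -- products of powers of J
  have hpowadd : ∀ a b : ℕ, J ^ a * J ^ (b + 1) = J ^ (a + (b + 1)) := by
    intro a b
    induction b with
    | zero => rw [Submodule.pow_one, ← Submodule.pow_succ]
    | succ b ihb =>
      have harith : a + (b + 1) + 1 = a + (b + 1 + 1) := by omega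
      rw [Submodule.pow_succ (M := J) (n := b + 1), ← mul_assoc, ihb,
        ← Submodule.pow_succ, harith]
  have hprod : ∀ (a b : ℕ) (x y : R), x ∈ J ^ a → y ∈ J ^ (b + 1) →
      x * y ∈ J ^ (a + (b + 1)) := by
    intro a b x y hx hy
    rw [← hpowadd a b]
    exact Submodule.mul_mem_mul hx hy
  have hantitone : ∀ a b : ℕ, a ≤ b → J ^ b ≤ J ^ a := fun a b h => Ideal.pow_le_pow_right h
  -- inverses
  have hinv : ∀ (m : ℕ) (x : G), of x - 1 ∈ J ^ m → of x⁻¹ - 1 ∈ J ^ m := by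
    intro m x hx
    have hkey : of x⁻¹ - 1 = -(of x⁻¹ * (of x - 1)) := by
      rw [mul_sub, ← map_mul, inv_mul_cancel, map_one, mul_one, neg_sub]
    rw [hkey]
    exact neg_mem (Ideal.mul_mem_left _ _ hx)
  -- powers
  have hpow : ∀ (r m : ℕ) (x : G), of x - 1 ∈ J ^ (r + 1) →
      (of x - 1) ^ (m + 1) ∈ J ^ ((r + 1) * (m + 1)) := by
    intro r m x hx
    induction m with
    | zero => simpa using hx
    | succ m ihm =>
      have h1 : (of x - 1) ^ (m + 1 + 1) = (of x - 1) ^ (m + 1) * (of x - 1) := pow_succ _ _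
      have h2 := hprod ((r + 1) * (m + 1)) r _ _ ihm hx
      have h3 : (r + 1) * (m + 1) + (r + 1) = (r + 1) * (m + 1 + 1) := by ring
      rw [h1, ← h3]
      exact h2
  -- p-th powers land one step deeper
  have hpth : ∀ i : Fin n, of (g i ^ p) - 1 ∈ J ^ (d i + 1) := by
    intro i
    have hx : of (g i) - 1 ∈ J ^ (d i) := by
      have := hmem i
      rw [hF (d i)] at this
      exact this
    obtain ⟨r, hr⟩ : ∃ r, d i = r + 1 := ⟨d i - 1, by have := hd1 i; omega⟩
    obtain ⟨q, hq⟩ : ∃ q, p = q + 1 := ⟨p - 1, by have := hp.two_le; omega⟩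
    have hfrob : of (g i ^ p) - 1 = (of (g i) - 1) ^ p := by
      rw [sub_pow_char_of_commute p (Commute.one_right _), one_pow, map_pow]
    rw [hfrob]
    have hx' : of (g i) - 1 ∈ J ^ (r + 1) := by rw [← hr]; exact hx
    have hmem1 := hpow r q (g i) hx'
    rw [← hq] at hmem1
    have hle : d i + 1 ≤ (r + 1) * p := by
      have h2 : 2 ≤ p := hp.two_le
      nlinarith [hr]
    exact hantitone _ _ hle hmem1
  -- commutators land deeper
  have hcommut : ∀ i j : Fin n, of ⁅g i, g j⁆ - 1 ∈ J ^ (d i + d j) := by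
    intro i j
    have hxi : of (g i) - 1 ∈ J ^ (d i) := by have := hmem i; rwa [hF (d i)] at this
    have hxj : of (g j) - 1 ∈ J ^ (d j) := by have := hmem j; rwa [hF (d j)] at this
    -- work with a = (g i)⁻¹, b = (g j)⁻¹
    set a := (g i)⁻¹ with ha
    set b := (g j)⁻¹ with hb
    have hA : of a - 1 ∈ J ^ (d i) := hinv _ _ hxi
    have hB : of b - 1 ∈ J ^ (d j) := hinv _ _ hxj
    have hcelt : ⁅g i, g j⁆ = a⁻¹ * b⁻¹ * a * b := by
      rw [ha, hb, inv_inv, inv_inv, commutatorElement_def]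
    have hfact : of (a⁻¹ * b⁻¹ * a * b) - 1
        = of (a⁻¹ * b⁻¹) * (of (a * b) - of (b * a)) := by
      rw [mul_sub, ← map_mul, ← map_mul]
      have e1 : a⁻¹ * b⁻¹ * (a * b) = a⁻¹ * b⁻¹ * a * b := by group
      have e2 : a⁻¹ * b⁻¹ * (b * a) = 1 := by group
      rw [e1, e2, map_one]
    have hdiff : of (a * b) - of (b * a)
        = (of a - 1) * (of b - 1) - (of b - 1) * (of a - 1) := by
      rw [map_mul, map_mul]
      noncomm_ring
    have hmem2 : of (a * b) - of (b * a) ∈ J ^ (d i + d j) := by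
      rw [hdiff]
      obtain ⟨r, hr⟩ : ∃ r, d i = r + 1 := ⟨d i - 1, by have := hd1 i; omega⟩
      obtain ⟨s, hs⟩ : ∃ s, d j = s + 1 := ⟨d j - 1, by have := hd1 j; omega⟩
      have h1 : (of a - 1) * (of b - 1) ∈ J ^ (d i + d j) := by
        rw [hs] at hB ⊢
        exact hprod (d i) s _ _ hA hB
      have h2 : (of b - 1) * (of a - 1) ∈ J ^ (d i + d j) := by
        have hA' : of a - 1 ∈ J ^ (r + 1) := by rw [← hr]; exact hA
        have hm := hprod (d j) r _ _ hB hA'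
        have e : d j + (r + 1) = d i + d j := by omega
        rwa [e] at hm
      exact sub_mem h1 h2
    rw [hcelt, hfact]
    exact Ideal.mul_mem_left _ _ hmem2
  -- J is nilpotent, hence F is eventually trivial
  obtain ⟨N, hN⟩ : IsNilpotent J := hJ ▸ finite_ring_isNilpotent_jacobson_bot R
  have htriv : ∀ r : ℕ, N ≤ r → ∀ x : G, x ∈ F r → x = 1 := by
    intro r hNr x hx
    rw [hF r] at hx
    have hle : J ^ r ≤ J ^ N := hantitone _ _ hNr
    have : of x - 1 ∈ (⊥ : Ideal R) := by
      have := hle hx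
      rwa [hN] at this
    rw [Ideal.mem_bot, sub_eq_zero] at this
    have h1 : of x = of 1 := by rw [this, map_one]
    exact MonoidAlgebra.of_injective h1
  -- the main downward induction
  have key : ∀ (m r : ℕ), 1 ≤ r → N ≤ r + m →
      F r ⊆ ↑(Subgroup.closure {x : G | ∃ j : Fin n, r ≤ d j ∧ x = g j}) := by
    intro m
    induction m with
    | zero =>
      intro r hr hNr x hx
      rw [htriv r (by omega) x hx]
      exact Subgroup.one_mem _
    | succ m ihm =>
      intro r hr hNr
      rw [← hgen r hr]
      have hle : Subgroup.closure ((g '' {i | d i = r}) ∪ F (r + 1))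
          ≤ Subgroup.closure {x : G | ∃ j : Fin n, r ≤ d j ∧ x = g j} := by
        refine (Subgroup.closure_le _).mpr ?_
        rintro x (⟨i, hi, rfl⟩ | hxF)
        · exact Subgroup.subset_closure ⟨i, le_of_eq hi.symm, rfl⟩
        · have h1 := ihm (r + 1) (by omega) (by omega) hxF
          refine Subgroup.closure_mono ?_ h1
          rintro y ⟨j, hj, rfl⟩
          exact ⟨j, by omega, rfl⟩
      exact SetLike.coe_subset_coe.mpr hle
  constructor
  · intro i
    have h1 : g i ^ p ∈ F (d i + 1) := by
      rw [hF (d i + 1)]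
      exact hpth i
    have h2 := key N (d i + 1) (by omega) (by omega) h1
    refine Subgroup.closure_mono ?_ h2
    rintro y ⟨j, hj, rfl⟩
    refine ⟨j, ?_, rfl⟩
    by_contra hij
    have : j ≤ i := not_lt.mp hij
    have := hmono this
    omega
  · intro i j hij
    have h1 : ⁅g i, g j⁆ ∈ F (d j + 1) := by
      rw [hF (d j + 1)]
      have := hcommut i j
      have hle : J ^ (d i + d j) ≤ J ^ (d j + 1) := hantitone _ _ (by have := hd1 i; omega)
      exact hle this
    have h2 := key N (d j + 1) (by omega) (by omega) h1
    refine Subgroup.closure_mono ?_ h2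
    rintro y ⟨l, hl, rfl⟩
    refine ⟨l, ?_, rfl⟩
    by_contra hjl
    have : l ≤ j := not_lt.mp hjl
    have := hmono this
    omega
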